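/- In a partially ordered vector space, if 0 ≤ x₁ ≤ x₂ and x₂ is disjoint to a positive vector y, then x₁ is disjoint to y. -/

import Mathlib

/-- Two vectors are disjoint: the upper bounds of {x+y, -x-y} equal those of {x-y, y-x}. -/
def Disj {X : Type*} [AddCommGroup X] [PartialOrder X] (x y : X) : Prop :=
  upperBounds ({x + y, -x - y} : Set X) = upperBounds ({x - y, y - x} : Set X)

theorem disjoint_of_le {X : Type*} [AddCommGroup X] [PartialOrder X] [IsOrderedAddMonoid X] [Module ℝ X] [PosSMulStrictMono ℝ X] [PosSMulReflectLT ℝ X]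
    (x₁ x₂ y : X) (hx₁ : 0 ≤ x₁) (h12 : x₁ ≤ x₂) (hy : 0 ≤ y) (h : Disj x₂ y) :
    Disj x₁ y := by
  unfold Disj at h ⊢
  ext z
  simp only [upperBounds, Set.mem_insert_iff, Set.mem_singleton_iff, Set.mem_setOf_eq] at h ⊢
  constructor
  · intro hz a ha
    have h1 : x₁ + y ≤ z := hz (Or.inl rfl)
    rcases ha with rfl | rfl
    · calc x₁ - y = x₁ + y - (y + y) := by abel
        _ ≤ x₁ + y := sub_le_self _ (add_nonneg hy hy)
        _ ≤ z := h1
    · calc y - x₁ = x₁ + y - (x₁ + x₁) := by abel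
        _ ≤ x₁ + y := sub_le_self _ (add_nonneg hx₁ hx₁)
        _ ≤ z := h1
  · intro hz a ha
    have hd : (0:X) ≤ x₂ - x₁ := sub_nonneg.mpr h12
    have k1 : x₁ - y ≤ z := hz (Or.inl rfl)
    have k2 : y - x₁ ≤ z := hz (Or.inr rfl)
    have e1 : x₂ - y ≤ z + (x₂ - x₁) := by
      calc x₂ - y = (x₁ - y) + (x₂ - x₁) := by abel
        _ ≤ z + (x₂ - x₁) := add_le_add_left k1 _
    have e2 : y - x₂ ≤ z + (x₂ - x₁) := by
      calc y - x₂ = (y - x₁) + (x₂ - x₁) - ((x₂ - x₁) + (x₂ - x₁)) := by abel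
        _ ≤ (y - x₁) + (x₂ - x₁) := sub_le_self _ (add_nonneg hd hd)
        _ ≤ z + (x₂ - x₁) := add_le_add_left k2 _
    have hmem : z + (x₂ - x₁) ∈ {x | ∀ ⦃a : X⦄, a = x₂ - y ∨ a = y - x₂ → a ≤ x} := by
      rintro a (rfl | rfl)
      · exact e1
      · exact e2
    rw [← h] at hmem
    have key : x₂ + y ≤ z + (x₂ - x₁) := hmem (Or.inl rfl)
    have hx1y : x₁ + y ≤ z := by
      have := sub_le_sub_right key (x₂ - x₁)
      calc x₁ + y = (x₂ + y) - (x₂ - x₁) := by abel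
        _ ≤ (z + (x₂ - x₁)) - (x₂ - x₁) := this
        _ = z := by abel
    rcases ha with rfl | rfl
    · exact hx1y
    · calc -x₁ - y ≤ 0 := by
            have := neg_nonpos.mpr (add_nonneg hx₁ hy)
            calc -x₁ - y = -(x₁ + y) := by abel
              _ ≤ 0 := this
        _ ≤ x₁ + y := add_nonneg hx₁ hy
        _ ≤ z := hx1y
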